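/- arXiv:2203.05423 — 3 statements merged into one kernel-verified Lean document; each statement's English description precedes it below -/
import Mathlib

section
/- Under the assumptions of the equality-of-covariances setting, the variance sequence satisfies 0 < inf_n σ_n² ≤ sup_n σ_n² < ∞, where σ_n² = log(1 − p/n) − Σ_{j=1}^q (n_j/n)² log(1 − p/n_j). -/
open MeasureTheory ProbabilityTheory Filter Matrix Finset Topology

noncomputable section

/-- The matrix (w.r.t. the standard basis) of the orthogonal projection of `ℝⁿ`
onto the orthogonal complement of the span of a set `S` of vectors. -/
def projCompl {n : ℕ} (S : Set (EuclideanSpace ℝ (Fin n))) :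
    Matrix (Fin n) (Fin n) ℝ :=
  Matrix.toEuclideanLin.symm
    ((Submodule.span ℝ S)ᗮ.subtypeL.toLinearMap ∘ₗ
      (Submodule.orthogonalProjectionOnto (Submodule.span ℝ S)ᗮ).toLinearMap)

/-- The quadratic form `vᵀ A v`. -/
def quadForm {n : ℕ} (A : Matrix (Fin n) (Fin n) ℝ) (v : Fin n → ℝ) : ℝ :=
  v ⬝ᵥ A.mulVec v

/-- `σ_n²` for the test of equality of covariance matrices. -/
def sigSqEq (n p q : ℕ) (nsub : ℕ → ℕ) : ℝ :=
  Real.log (1 - (p : ℝ) / n) -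
    ∑ j ∈ Finset.range q, ((nsub j : ℝ) / n) ^ 2 * Real.log (1 - (p : ℝ) / (nsub j))

lemma aux_log_lower (x : ℝ) (h0 : 0 ≤ x) (h1 : x < 1) :
    x + x^2/2 ≤ -Real.log (1 - x) := by
  have h : |x| < 1 := by rwa [abs_of_nonneg h0]
  have hs := Real.hasSum_pow_div_log_of_abs_lt_one h
  have h2 := sum_le_hasSum (Finset.range 2) (fun i _ => by positivity) hs
  have : (∑ i ∈ Finset.range 2, x ^ (i + 1) / (i + 1)) = x + x^2/2 := by
    simp [Finset.sum_range_succ]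
    norm_num
  linarith [this ▸ h2]

lemma aux_log_upper (t : ℝ) (h0 : 0 ≤ t) (h1 : t ≤ 1/2) :
    -Real.log (1 - t) ≤ t + t^2/2 + t^3/3 + t^4/4 + 2*t^5 := by
  have h : |t| < 1 := by rw [abs_of_nonneg h0]; linarith
  have hb := Real.abs_log_sub_add_sum_range_le h 4
  rw [abs_of_nonneg h0] at hb
  have hsum : (∑ i ∈ Finset.range 4, t ^ (i + 1) / (i + 1)) = t + t^2/2 + t^3/3 + t^4/4 := by
    simp [Finset.sum_range_succ]
    norm_num
  rw [hsum] at hb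
  have htail : t^(4+1)/(1-t) ≤ 2*t^5 := by
    rw [div_le_iff₀ (by linarith)]
    have h5 : (0:ℝ) ≤ t^5 * (1 - 2*t) := mul_nonneg (pow_nonneg h0 5) (by linarith)
    norm_num
    nlinarith [h5]
  have := (abs_le.1 hb).1
  linarith

lemma key_basic (n p q : ℕ) (f : ℕ → ℕ) (hq : 2 ≤ q) (hp : 1 ≤ p)
    (hnj : ∀ j < q, p < f j) (hs : ∑ j ∈ Finset.range q, f j = n) :
    2 * p + 2 ≤ n := by
  have hqn : q * (p + 1) ≤ n := by
    calc q * (p + 1) = ∑ _j ∈ Finset.range q, (p + 1) := by simp [mul_comm]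
    _ ≤ ∑ j ∈ Finset.range q, f j :=
        Finset.sum_le_sum (fun j hj => (hnj j (Finset.mem_range.1 hj)))
    _ = n := hs
  nlinarith

lemma key_lower (n p q : ℕ) (f : ℕ → ℕ) (hq : 2 ≤ q) (hp : 1 ≤ p)
    (hnj : ∀ j < q, p < f j) (hs : ∑ j ∈ Finset.range q, f j = n) :
    ((p:ℝ)/n)^2/48 ≤ sigSqEq n p q f := by
  have hn2 : 2 * p + 2 ≤ n := key_basic n p q f hq hp hnj hs
  have hn0 : (0:ℝ) < n := by
    have : 0 < n := by omega
    exact_mod_cast this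
  set t : ℝ := (p:ℝ)/n with htdef
  have ht0 : 0 ≤ t := by positivity
  have ht2 : t ≤ 1/2 := by
    rw [htdef, div_le_iff₀ hn0]
    have : (2:ℝ) * p + 2 ≤ n := by exact_mod_cast hn2
    linarith
  have hcast : (∑ j ∈ Finset.range q, (f j:ℝ)) = n := by exact_mod_cast hs
  -- bound each term of the sum
  have hterm : ∀ j ∈ Finset.range q,
      ((f j:ℝ)/n)^2 * Real.log (1 - (p:ℝ)/(f j)) ≤
        -((f j:ℝ) * p / n^2 + (p:ℝ)^2/n^2/2) := by
    intro j hj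
    have hfj : p < f j := hnj j (Finset.mem_range.1 hj)
    have hfj0 : (0:ℝ) < f j := by
      have : 0 < f j := by omega
      exact_mod_cast this
    set x : ℝ := (p:ℝ)/(f j) with hxdef
    have hx0 : 0 ≤ x := by positivity
    have hx1 : x < 1 := by
      rw [hxdef, div_lt_one hfj0]
      exact_mod_cast hfj
    have hlog : Real.log (1 - x) ≤ -(x + x^2/2) := by
      linarith [aux_log_lower x hx0 hx1]
    have h1 : ((f j:ℝ)/n)^2 * Real.log (1 - x) ≤ ((f j:ℝ)/n)^2 * (-(x + x^2/2)) :=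
      mul_le_mul_of_nonneg_left hlog (sq_nonneg _)
    have h2 : ((f j:ℝ)/n)^2 * (-(x + x^2/2)) = -((f j:ℝ) * p / n^2 + (p:ℝ)^2/n^2/2) := by
      rw [hxdef]
      field_simp
    linarith [h2 ▸ h1]
  have hsumle : ∑ j ∈ Finset.range q, ((f j:ℝ)/n)^2 * Real.log (1 - (p:ℝ)/(f j)) ≤
      -(t + q * t^2 / 2) := by
    calc ∑ j ∈ Finset.range q, ((f j:ℝ)/n)^2 * Real.log (1 - (p:ℝ)/(f j))
        ≤ ∑ j ∈ Finset.range q, -((f j:ℝ) * p / n^2 + (p:ℝ)^2/n^2/2) :=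
          Finset.sum_le_sum hterm
      _ = -(t + q * t^2 / 2) := by
          rw [Finset.sum_neg_distrib, Finset.sum_add_distrib, Finset.sum_const,
            Finset.card_range, nsmul_eq_mul]
          have e1 : ∑ j ∈ Finset.range q, ((f j:ℝ) * p / n^2) =
              (∑ j ∈ Finset.range q, (f j:ℝ)) * p / n^2 := by
            rw [Finset.sum_mul, Finset.sum_div]
          rw [e1, hcast, htdef]
          field_simp
  have hL : -(t + t^2/2 + t^3/3 + t^4/4 + 2*t^5) ≤ Real.log (1 - t) := by
    linarith [aux_log_upper t ht0 ht2]
  have hq2 : (2:ℝ) ≤ q := by exact_mod_cast hq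
  have hfact : (0:ℝ) ≤ t^2 * ((1/2 - t) * (2*t^2 + 5/4*t + 23/24)) := by
    apply mul_nonneg (sq_nonneg t)
    apply mul_nonneg (by linarith)
    positivity
  have hqt : 2 * (t^2/2) ≤ (q:ℝ) * t^2 / 2 * 2 := by nlinarith [sq_nonneg t]
  unfold sigSqEq
  rw [← htdef]
  nlinarith [hfact, sq_nonneg t]

lemma key_upper (n p q : ℕ) (f : ℕ → ℕ) (C : ℝ) (hC0 : 0 ≤ C) (hC1 : C < 1)
    (hq : 2 ≤ q) (hp : 1 ≤ p) (hnj : ∀ j < q, p < f j)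
    (hs : ∑ j ∈ Finset.range q, f j = n) (hx : ∀ j < q, (p:ℝ)/(f j) ≤ C) :
    sigSqEq n p q f ≤ -Real.log (1 - C) := by
  have hn2 : 2 * p + 2 ≤ n := key_basic n p q f hq hp hnj hs
  have hn0 : (0:ℝ) < n := by
    have : 0 < n := by omega
    exact_mod_cast this
  have hK : 0 ≤ -Real.log (1 - C) := by
    have := Real.log_nonpos (by linarith) (by linarith : (1:ℝ) - C ≤ 1)
    linarith
  have hlog1 : Real.log (1 - (p:ℝ)/n) ≤ 0 := by
    apply Real.log_nonpos
    · have : (2:ℝ) * p + 2 ≤ n := by exact_mod_cast hn2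
      have : (p:ℝ)/n ≤ 1/2 := by
        rw [div_le_iff₀ hn0]; linarith
      linarith
    · have : 0 ≤ (p:ℝ)/n := by positivity
      linarith
  have hterm : ∀ j ∈ Finset.range q,
      ((f j:ℝ)/n)^2 * Real.log (1 - C) ≤ ((f j:ℝ)/n)^2 * Real.log (1 - (p:ℝ)/(f j)) := by
    intro j hj
    apply mul_le_mul_of_nonneg_left _ (sq_nonneg _)
    apply Real.log_le_log (by linarith)
    have := hx j (Finset.mem_range.1 hj)
    linarith
  have hw : ∀ j ∈ Finset.range q, ((f j:ℝ)/n)^2 ≤ (f j:ℝ)/n := by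
    intro j hj
    have hle : f j ≤ n := hs ▸ Finset.single_le_sum (fun i _ => Nat.zero_le _) hj
    have h1 : (f j:ℝ)/n ≤ 1 := by
      rw [div_le_one hn0]; exact_mod_cast hle
    have h0 : 0 ≤ (f j:ℝ)/n := by positivity
    nlinarith
  have hwsum : ∑ j ∈ Finset.range q, ((f j:ℝ)/n)^2 ≤ 1 := by
    calc ∑ j ∈ Finset.range q, ((f j:ℝ)/n)^2 ≤ ∑ j ∈ Finset.range q, (f j:ℝ)/n :=
        Finset.sum_le_sum hw
      _ = 1 := by
        rw [← Finset.sum_div]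
        rw [show (∑ j ∈ Finset.range q, (f j:ℝ)) = n by exact_mod_cast hs]
        field_simp
  have hsumge : Real.log (1 - C) * ∑ j ∈ Finset.range q, ((f j:ℝ)/n)^2 ≤
      ∑ j ∈ Finset.range q, ((f j:ℝ)/n)^2 * Real.log (1 - (p:ℝ)/(f j)) := by
    rw [Finset.mul_sum]
    apply Finset.sum_le_sum
    intro j hj
    rw [mul_comm]
    exact hterm j hj
  have hKs : -Real.log (1 - C) * ∑ j ∈ Finset.range q, ((f j:ℝ)/n)^2 ≤ -Real.log (1 - C) := by
    have hnn : 0 ≤ ∑ j ∈ Finset.range q, ((f j:ℝ)/n)^2 :=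
      Finset.sum_nonneg (fun j _ => sq_nonneg _)
    nlinarith
  unfold sigSqEq
  nlinarith [hsumge, hKs, hlog1]

/-- **Lemma 5.8.** In the equality-of-covariances setting, `0 < inf σ_n² ≤ sup σ_n² < ∞`. -/
theorem statement_8
    (p q : ℕ → ℕ) (nsub : ℕ → ℕ → ℕ)
    (hq2 : ∀ n, 4 ≤ n → 2 ≤ q n)
    (hp1 : ∀ n, 4 ≤ n → 1 ≤ p n)
    (hnjp : ∀ n, 4 ≤ n → ∀ j < q n, p n < nsub n j)
    (hsum : ∀ n, 4 ≤ n → ∑ j ∈ Finset.range (q n), nsub n j = n)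
    (hinf : ∃ c > 0, ∀ n, 4 ≤ n → c ≤ (p n : ℝ) / n)
    (hsup : ∃ C < 1, ∀ n, 4 ≤ n → ∀ j < q n, (p n : ℝ) / (nsub n j) ≤ C) :
    (∃ c > 0, ∀ n, 4 ≤ n → c ≤ sigSqEq n (p n) (q n) (nsub n)) ∧
    (∃ C : ℝ, ∀ n, 4 ≤ n → sigSqEq n (p n) (q n) (nsub n) ≤ C) := by

  obtain ⟨c, hc, hcle⟩ := hinf
  obtain ⟨C, hC1, hCle⟩ := hsup
  constructor
  · refine ⟨c^2/48, by positivity, fun n hn => ?_⟩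
    have hkey := key_lower n (p n) (q n) (nsub n) (hq2 n hn) (hp1 n hn) (hnjp n hn) (hsum n hn)
    have hct : c ≤ (p n : ℝ)/n := hcle n hn
    have : c^2 ≤ ((p n : ℝ)/n)^2 := pow_le_pow_left₀ hc.le hct 2
    linarith
  · refine ⟨-Real.log (1 - max C 0), fun n hn => ?_⟩
    exact key_upper n (p n) (q n) (nsub n) (max C 0) (le_max_right _ _)
      (max_lt hC1 one_pos) (hq2 n hn) (hp1 n hn) (hnjp n hn) (hsum n hn)
      (fun j hj => le_trans (hCle n hn j hj) (le_max_left _ _))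
end
end

section
/- Under the stated asymptotic regime, the deterministic quantity Σ_{i=p_1+1}^p log(n−i+1) − Σ_{j=2}^q Σ_{i=p_{j−1}*+1}^{p_j*} log(n−i+1+p_{j−1}*) equals μ_n + σ_n²/2 + o(1) as n → ∞; that is, the difference of the two sides converges to 0. -/
open MeasureTheory ProbabilityTheory Filter Matrix Finset Topology

noncomputable section

/-- Partial sums `p_j* = p_1 + … + p_j` of the block sizes (0-based list of sizes). -/
def pstar (psz : ℕ → ℕ) (j : ℕ) : ℕ := ∑ t ∈ Finset.range j, psz t

/-- `σ_n² = 2{Σ_{i=1}^q log(1 - p_i/n) - log(1 - p/n)}`. -/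
def sigSq (n p q : ℕ) (psz : ℕ → ℕ) : ℝ :=
  2 * ((∑ j ∈ Finset.range q, Real.log (1 - (psz j : ℝ) / n)) -
    Real.log (1 - (p : ℝ) / n))

/-- `μ_n = Σ_{i=1}^q (n - p_i - 1/2) log(1 - p_i/n) - (n - p - 1/2) log(1 - p/n)`. -/
def muN (n p q : ℕ) (psz : ℕ → ℕ) : ℝ :=
  (∑ j ∈ Finset.range q, ((n : ℝ) - psz j - 1 / 2) * Real.log (1 - (psz j : ℝ) / n)) -
    ((n : ℝ) - p - 1 / 2) * Real.log (1 - (p : ℝ) / n)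

/-- Stirling-type comparison function (up to the additive constant `log √(2π)`). -/
def gSt (m : ℕ) : ℝ := (m : ℝ) * Real.log m - m + Real.log m / 2

/-- One-step discrepancy between `log (m+1)` and the increment of `gSt`. -/
def ddSt (m : ℕ) : ℝ := Real.log ((m : ℝ) + 1) - (gSt (m + 1) - gSt m)

lemma ddSt_eq (m : ℕ) (hm : 1 ≤ m) :
    ddSt m = 1 - ((m : ℝ) + 1 / 2) * Real.log (1 + 1 / m) := by
  have hm0 : (0 : ℝ) < m := by exact_mod_cast hm
  have h1 : ((m : ℝ) + 1) = m * (1 + 1 / m) := by field_simp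
  have hlog : Real.log ((m : ℝ) + 1) = Real.log m + Real.log (1 + 1 / m) := by
    rw [h1, Real.log_mul (ne_of_gt hm0) (by positivity)]
  simp only [ddSt, gSt]
  push_cast
  rw [hlog]
  ring

lemma ddSt_bound (m : ℕ) (hm : 2 ≤ m) : |ddSt m| ≤ 4 / (m : ℝ) ^ 2 := by
  have hm2 : (2 : ℝ) ≤ m := by exact_mod_cast hm
  have hm0 : (0 : ℝ) < m := by linarith
  have hx : |(-(1 / (m : ℝ)))| < 1 := by
    rw [abs_neg, abs_of_pos (by positivity)]
    rw [div_lt_one hm0]; linarith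
  have h := Real.abs_log_sub_add_sum_range_le hx 2
  rw [Finset.sum_range_succ, Finset.sum_range_one] at h
  rw [abs_neg, abs_of_pos (show (0:ℝ) < 1 / m by positivity)] at h
  rw [show (1 : ℝ) - -(1 / (m : ℝ)) = 1 + 1 / m by ring] at h
  set L := Real.log (1 + 1 / (m : ℝ)) with hL
  set r := L - (1 / (m : ℝ) - (1 / m) ^ 2 / 2) with hrdef
  have hr : |r| ≤ (1 / (m : ℝ)) ^ (2 + 1) / (1 - 1 / m) := by
    have e : (-(1 / (m : ℝ))) ^ (0 + 1) / (((0 : ℕ) : ℝ) + 1)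
        + (-(1 / (m : ℝ))) ^ (1 + 1) / (((1 : ℕ) : ℝ) + 1) + L = r := by
      rw [hrdef]; push_cast; ring
    rw [← e]; exact h
  have h12 : (1 : ℝ) / 2 ≤ 1 - 1 / m := by
    have : (1 : ℝ) / m ≤ 1 / 2 := by
      apply one_div_le_one_div_of_le <;> linarith
    linarith
  have hr2 : |r| ≤ 2 / (m : ℝ) ^ 3 := by
    refine hr.trans ?_
    have h1 : ((1 : ℝ) / m) ^ (2 + 1) / (1 - 1 / m) ≤ (1 / (m : ℝ)) ^ (2 + 1) / (1 / 2) := by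
      gcongr
    refine h1.trans_eq ?_
    norm_num
    field_simp
  have h4 : ddSt m = 1 / (4 * (m : ℝ) ^ 2) - ((m : ℝ) + 1 / 2) * r := by
    rw [ddSt_eq m (by omega), ← hL]
    have hLr : L = (1 / (m : ℝ) - (1 / m) ^ 2 / 2) + r := by rw [hrdef]; ring
    rw [hLr]
    field_simp
    ring
  rw [h4]
  have h5 : |((m : ℝ) + 1 / 2) * r| ≤ ((m : ℝ) + 1 / 2) * (2 / m ^ 3) := by
    rw [abs_mul, abs_of_pos (by positivity : (0:ℝ) < (m : ℝ) + 1 / 2)]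
    exact mul_le_mul_of_nonneg_left hr2 (by positivity)
  have h6 := abs_sub (1 / (4 * (m : ℝ) ^ 2)) (((m : ℝ) + 1 / 2) * r)
  have h7 : |1 / (4 * (m : ℝ) ^ 2)| = 1 / (4 * (m : ℝ) ^ 2) := abs_of_pos (by positivity)
  have h8 : 1 / (4 * (m : ℝ) ^ 2) + ((m : ℝ) + 1 / 2) * (2 / m ^ 3) ≤ 4 / (m : ℝ) ^ 2 := by
    have e1 : 1 / (4 * (m : ℝ) ^ 2) + ((m : ℝ) + 1 / 2) * (2 / m ^ 3)
        = (m / 4 + 2 * m + 1) / (m : ℝ) ^ 3 := by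
      field_simp
      ring
    have e2 : (4 : ℝ) / (m : ℝ) ^ 2 = (4 * m) / (m : ℝ) ^ 3 := by
      field_simp
    rw [e1, e2]
    apply div_le_div_of_nonneg_right ?_ (by positivity)
    linarith
  linarith

lemma sum_log_eq_ddSt (n k : ℕ) (hk : k ≤ n) :
    ∑ i ∈ Finset.range k, Real.log ((n : ℝ) - i)
      = (∑ m ∈ Finset.Ico (n - k) n, ddSt m) + gSt n - gSt (n - k) := by
  induction k with
  | zero => simp
  | succ k ih =>
    have hk' : k ≤ n := by omega
    rw [Finset.sum_range_succ, ih hk']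
    rw [Finset.sum_eq_sum_Ico_succ_bot (show n - (k+1) < n by omega) ddSt]
    rw [show n - (k+1) + 1 = n - k from by omega]
    have h3 : ddSt (n - (k + 1)) = Real.log ((n : ℝ) - k) - (gSt (n - k) - gSt (n - (k + 1))) := by
      simp only [ddSt]
      rw [show n - (k+1) + 1 = n - k from by omega]
      have harg : ((n - (k + 1) : ℕ) : ℝ) + 1 = (n : ℝ) - k := by
        rw [Nat.cast_sub (by omega : k + 1 ≤ n)]; push_cast; ring
      rw [harg]
    rw [h3]
    ring

lemma gSt_diff (n k : ℕ) (hk : k < n) :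
    gSt n - gSt (n - k)
      = (k : ℝ) * Real.log n - ((n : ℝ) - k + 1 / 2) * Real.log (1 - (k : ℝ) / n) - k := by
  have hn0 : (0 : ℝ) < n := by have h0 : 0 < n := by omega
                               exact_mod_cast h0
  have hkn : (k : ℝ) < n := by exact_mod_cast hk
  have hcast : ((n - k : ℕ) : ℝ) = (n : ℝ) - k := by rw [Nat.cast_sub hk.le]
  have hnk : (0 : ℝ) < (n : ℝ) - k := by linarith
  have hL : Real.log (1 - (k : ℝ) / n) = Real.log ((n : ℝ) - k) - Real.log n := by
    rw [show (1 - (k : ℝ) / n) = ((n : ℝ) - k) / n by field_simp,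
      Real.log_div (ne_of_gt hnk) (ne_of_gt hn0)]
  have hlognk : Real.log ((n : ℝ) - k) = Real.log n + Real.log (1 - (k : ℝ) / n) := by
    rw [hL]; ring
  simp only [gSt, hcast, hlognk]
  ring

lemma ddSt_sum_abs (n k pn : ℕ) (hk : k ≤ pn) (h2 : 2 ≤ n - pn) :
    |∑ m ∈ Finset.Ico (n - k) n, ddSt m| ≤ (k : ℝ) * (4 / ((n : ℝ) - pn) ^ 2) := by
  have hpn : pn ≤ n := by omega
  have hcast : ((n - pn : ℕ) : ℝ) = (n : ℝ) - pn := by rw [Nat.cast_sub hpn]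
  have hnp2 : (2 : ℝ) ≤ (n : ℝ) - pn := by
    rw [← hcast]; exact_mod_cast h2
  calc |∑ m ∈ Finset.Ico (n - k) n, ddSt m|
      ≤ ∑ m ∈ Finset.Ico (n - k) n, |ddSt m| := Finset.abs_sum_le_sum_abs _ _
    _ ≤ ∑ _m ∈ Finset.Ico (n - k) n, 4 / ((n : ℝ) - pn) ^ 2 := by
        refine Finset.sum_le_sum fun m hm => ?_
        have hm1 := (Finset.mem_Ico.mp hm).1
        have hmnk : n - pn ≤ m := by omega
        have hm2 : 2 ≤ m := by omega
        refine (ddSt_bound m hm2).trans ?_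
        have hmR : (n : ℝ) - pn ≤ m := by
          rw [← hcast]; exact_mod_cast hmnk
        gcongr
    _ = ((n - (n - k) : ℕ) : ℝ) * (4 / ((n : ℝ) - pn) ^ 2) := by
        rw [Finset.sum_const, Nat.card_Ico, nsmul_eq_mul]
    _ = (k : ℝ) * (4 / ((n : ℝ) - pn) ^ 2) := by
        congr 1
        have : n - (n - k) = k := by omega
        rw [this]

/-- Equation (5.2): Stirling-formula expansion of the centering term:
`Σ_{i=p₁+1}^p log(n-i+1) - Σ_{j=2}^q Σ_{i=p*_{j-1}+1}^{p*_j} log(n-i+1+p*_{j-1})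
  = μ_n + σ_n²/2 + o(1)`. -/
theorem statement_12
    (p q : ℕ → ℕ) (psz : ℕ → ℕ → ℕ) (η : ℝ) (hη0 : 0 < η) (hη1 : η < 1)
    (hp2 : ∀ n, 3 ≤ n → 2 ≤ p n) (hpn : ∀ n, 3 ≤ n → p n < n)
    (hq2 : ∀ n, 3 ≤ n → 2 ≤ q n)
    (hpsz1 : ∀ n, 3 ≤ n → ∀ j < q n, 1 ≤ psz n j)
    (hsumsz : ∀ n, 3 ≤ n → ∑ j ∈ Finset.range (q n), psz n j = p n)
    (hinf : ∃ c > 0, ∀ n, 3 ≤ n → ∀ j < q n, c ≤ (psz n j : ℝ) * q n / n)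
    (hsup : ∃ C < 1, ∀ n, 3 ≤ n → (p n : ℝ) / n ≤ C)
    (hmax : ∀ n, 3 ≤ n → ∀ j < q n, (psz n j : ℝ) ≤ η * p n) :
    Tendsto (fun n =>
        ((∑ i ∈ Finset.Ico (psz n 0) (p n), Real.log ((n : ℝ) - i)) -
          ∑ j ∈ Finset.Ico 1 (q n),
            ∑ i ∈ Finset.Ico (pstar (psz n) j) (pstar (psz n) (j + 1)),
              Real.log ((n : ℝ) - i + pstar (psz n) j)) -
        (muN n (p n) (q n) (psz n) + sigSq n (p n) (q n) (psz n) / 2))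
      atTop (𝓝 0) := by
  obtain ⟨C, hC1, hC⟩ := hsup
  have hsqz : Tendsto (fun n : ℕ => 8 * C / (1 - C) ^ 2 * (1 / (n : ℝ))) atTop (𝓝 0) := by
    have := (tendsto_const_nhds (x := 8 * C / (1 - C) ^ 2)).mul
      tendsto_one_div_atTop_nhds_zero_nat
    simpa using this
  refine squeeze_zero_norm' ?_ hsqz
  filter_upwards [Filter.eventually_ge_atTop 3,
    Filter.eventually_ge_atTop ⌈(2 : ℝ) / (1 - C)⌉₊] with n hn3 hnN
  have hn0R : (0 : ℝ) < n := by positivity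
  have hC0 : 0 ≤ C := le_trans (by positivity) (hC n hn3)
  have hC1' : (0 : ℝ) < 1 - C := by linarith
  have hNle : (2 : ℝ) / (1 - C) ≤ n := le_trans (Nat.le_ceil _) (by exact_mod_cast hnN)
  have h2le : (2 : ℝ) ≤ (n : ℝ) * (1 - C) := (div_le_iff₀ hC1').mp hNle
  have hpCn : (p n : ℝ) ≤ C * n := (div_le_iff₀ hn0R).mp (hC n hn3)
  have hnp2R : (2 : ℝ) ≤ (n : ℝ) - p n := by nlinarith
  have hnp2 : 2 ≤ n - p n := by
    have h' : (p n : ℝ) + 2 ≤ n := by linarith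
    have : p n + 2 ≤ n := by exact_mod_cast h'
    omega
  have hs : ∑ j ∈ Finset.range (q n), psz n j = p n := hsumsz n hn3
  have hq0 : 0 < q n := by have := hq2 n hn3; omega
  have hpsz_le : ∀ j < q n, psz n j ≤ p n := fun j hj =>
    hs ▸ Finset.single_le_sum (f := psz n) (fun _ _ => Nat.zero_le _) (Finset.mem_range.mpr hj)
  have hpszlt : ∀ j < q n, psz n j < n := fun j hj =>
    lt_of_le_of_lt (hpsz_le j hj) (hpn n hn3)
  set S : ℕ → ℝ := fun k => ∑ i ∈ Finset.range k, Real.log ((n : ℝ) - i) with hS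
  have hA : (∑ i ∈ Finset.Ico (psz n 0) (p n), Real.log ((n : ℝ) - i))
      = S (p n) - S (psz n 0) :=
    Finset.sum_Ico_eq_sub _ (hpsz_le 0 hq0)
  have hB : ∀ j ∈ Finset.Ico 1 (q n),
      (∑ i ∈ Finset.Ico (pstar (psz n) j) (pstar (psz n) (j + 1)),
        Real.log ((n : ℝ) - i + pstar (psz n) j)) = S (psz n j) := by
    intro j _
    rw [Finset.sum_Ico_eq_sum_range]
    have hps : pstar (psz n) (j + 1) - pstar (psz n) j = psz n j := by
      simp [pstar, Finset.sum_range_succ]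
    rw [hps]
    refine Finset.sum_congr rfl fun i _ => ?_
    congr 1
    push_cast
    ring
  have hC' : ∑ j ∈ Finset.range (q n), S (psz n j)
      = S (psz n 0) + ∑ j ∈ Finset.Ico 1 (q n), S (psz n j) := by
    rw [Finset.range_eq_Ico, Finset.sum_eq_sum_Ico_succ_bot hq0]
  have hMain : ((∑ i ∈ Finset.Ico (psz n 0) (p n), Real.log ((n : ℝ) - i)) -
        ∑ j ∈ Finset.Ico 1 (q n),
          ∑ i ∈ Finset.Ico (pstar (psz n) j) (pstar (psz n) (j + 1)),
            Real.log ((n : ℝ) - i + pstar (psz n) j))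
      = S (p n) - ∑ j ∈ Finset.range (q n), S (psz n j) := by
    rw [hA, Finset.sum_congr rfl hB, hC']
    ring
  -- deterministic identity
  have hdet : (gSt n - gSt (n - p n)) - ∑ j ∈ Finset.range (q n), (gSt n - gSt (n - psz n j))
      = muN n (p n) (q n) (psz n) + sigSq n (p n) (q n) (psz n) / 2 := by
    have hgp := gSt_diff n (p n) (hpn n hn3)
    have hgj : ∀ j ∈ Finset.range (q n), gSt n - gSt (n - psz n j)
        = (psz n j : ℝ) * Real.log n
          - ((n : ℝ) - psz n j + 1 / 2) * Real.log (1 - (psz n j : ℝ) / n) - psz n j :=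
      fun j hj => gSt_diff n (psz n j) (hpszlt j (Finset.mem_range.mp hj))
    rw [hgp, Finset.sum_congr rfl hgj]
    simp only [muN, sigSq, Finset.sum_sub_distrib]
    rw [← Finset.sum_mul]
    have hcast : (∑ j ∈ Finset.range (q n), ((psz n j : ℕ) : ℝ)) = (p n : ℝ) := by
      rw [← Nat.cast_sum, hs]
    rw [hcast]
    have hsplit : ∑ j ∈ Finset.range (q n),
          ((n : ℝ) - psz n j + 1 / 2) * Real.log (1 - (psz n j : ℝ) / n)
        = ∑ j ∈ Finset.range (q n),
            ((n : ℝ) - psz n j - 1 / 2) * Real.log (1 - (psz n j : ℝ) / n)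
          + ∑ j ∈ Finset.range (q n), Real.log (1 - (psz n j : ℝ) / n) := by
      rw [← Finset.sum_add_distrib]
      exact Finset.sum_congr rfl fun j _ => by ring
    rw [hsplit]
    ring
  have hSdd : ∀ k, k ≤ n → S k = (∑ m ∈ Finset.Ico (n - k) n, ddSt m) + gSt n - gSt (n - k) :=
    fun k hk => sum_log_eq_ddSt n k hk
  have hfn : ((∑ i ∈ Finset.Ico (psz n 0) (p n), Real.log ((n : ℝ) - i)) -
        ∑ j ∈ Finset.Ico 1 (q n),
          ∑ i ∈ Finset.Ico (pstar (psz n) j) (pstar (psz n) (j + 1)),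
            Real.log ((n : ℝ) - i + pstar (psz n) j)) -
        (muN n (p n) (q n) (psz n) + sigSq n (p n) (q n) (psz n) / 2)
      = (∑ m ∈ Finset.Ico (n - p n) n, ddSt m)
        - ∑ j ∈ Finset.range (q n), ∑ m ∈ Finset.Ico (n - psz n j) n, ddSt m := by
    rw [hMain, hSdd (p n) (le_of_lt (hpn n hn3)),
      Finset.sum_congr rfl
        (fun j hj => hSdd (psz n j) (le_of_lt (hpszlt j (Finset.mem_range.mp hj))))]
    have hcomb : ∑ j ∈ Finset.range (q n),
          ((∑ m ∈ Finset.Ico (n - psz n j) n, ddSt m) + gSt n - gSt (n - psz n j))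
        = (∑ j ∈ Finset.range (q n), ∑ m ∈ Finset.Ico (n - psz n j) n, ddSt m)
          + ∑ j ∈ Finset.range (q n), (gSt n - gSt (n - psz n j)) := by
      rw [← Finset.sum_add_distrib]
      exact Finset.sum_congr rfl fun j _ => by ring
    rw [hcomb]
    linear_combination hdet
  rw [Real.norm_eq_abs, hfn]
  have hTp := ddSt_sum_abs n (p n) (p n) le_rfl hnp2
  have hTj : ∀ j ∈ Finset.range (q n),
      |∑ m ∈ Finset.Ico (n - psz n j) n, ddSt m|
        ≤ (psz n j : ℝ) * (4 / ((n : ℝ) - p n) ^ 2) :=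
    fun j hj => ddSt_sum_abs n (psz n j) (p n) (hpsz_le j (Finset.mem_range.mp hj)) hnp2
  have hsumT : |∑ j ∈ Finset.range (q n), ∑ m ∈ Finset.Ico (n - psz n j) n, ddSt m|
      ≤ (p n : ℝ) * (4 / ((n : ℝ) - p n) ^ 2) := by
    refine (Finset.abs_sum_le_sum_abs _ _).trans ?_
    refine (Finset.sum_le_sum hTj).trans_eq ?_
    rw [← Finset.sum_mul, ← Nat.cast_sum, hs]
  have habs := abs_sub (∑ m ∈ Finset.Ico (n - p n) n, ddSt m)
    (∑ j ∈ Finset.range (q n), ∑ m ∈ Finset.Ico (n - psz n j) n, ddSt m)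
  have hfinal : (p n : ℝ) * (4 / ((n : ℝ) - p n) ^ 2) + (p n : ℝ) * (4 / ((n : ℝ) - p n) ^ 2)
      ≤ 8 * C / (1 - C) ^ 2 * (1 / n) := by
    have hnpPos : (0 : ℝ) < (n : ℝ) - p n := by linarith
    have hlow : (1 - C) * n ≤ (n : ℝ) - p n := by nlinarith
    have hlowPos : (0 : ℝ) < (1 - C) * n := by positivity
    have e1 : (p n : ℝ) * (4 / ((n : ℝ) - p n) ^ 2) + (p n : ℝ) * (4 / ((n : ℝ) - p n) ^ 2)
        = 8 * (p n : ℝ) / ((n : ℝ) - p n) ^ 2 := by ring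
    have e2 : 8 * C / (1 - C) ^ 2 * (1 / n) = 8 * (C * n) / ((1 - C) * n) ^ 2 := by
      field_simp
    rw [e1, e2]
    apply div_le_div₀ (by positivity) (by linarith) (by positivity)
    exact pow_le_pow_left₀ (le_of_lt hlowPos) hlow 2
  calc |(∑ m ∈ Finset.Ico (n - p n) n, ddSt m)
        - ∑ j ∈ Finset.range (q n), ∑ m ∈ Finset.Ico (n - psz n j) n, ddSt m|
      ≤ (p n : ℝ) * (4 / ((n : ℝ) - p n) ^ 2) + (p n : ℝ) * (4 / ((n : ℝ) - p n) ^ 2) := by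
        refine habs.trans ?_
        exact add_le_add hTp hsumT
    _ ≤ 8 * C / (1 - C) ^ 2 * (1 / n) := hfinal
end
end

section
/- Under the stated asymptotic regime, the deterministic sums satisfy Σ_{i=p_1+1}^p σ_{n,1,i}² = σ_n² + o(1) as n → ∞, where σ_{n,1,i}² = 2(1/(n−i+1) − 1/(n−i+1+p_{g(i)−1}*)). -/
open MeasureTheory ProbabilityTheory Filter Matrix Finset Topology

noncomputable section

lemma log_gap_bounds {x : ℝ} (hx : 2 ≤ x) :
    1/x ≤ Real.log x - Real.log (x-1) ∧ Real.log x - Real.log (x-1) ≤ 1/(x-1) := by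
  have h1 : (0:ℝ) < x - 1 := by linarith
  have h0 : (0:ℝ) < x := by linarith
  constructor
  · have := Real.log_le_sub_one_of_pos (x := (x-1)/x) (by positivity)
    rw [Real.log_div (by linarith) (by linarith)] at this
    have hx' : (x-1)/x - 1 = -(1/x) := by field_simp; ring
    linarith [this, hx'.le]
  · have := Real.log_le_sub_one_of_pos (x := x/(x-1)) (by positivity)
    rw [Real.log_div (by linarith) (by linarith)] at this
    have hx' : x/(x-1) - 1 = 1/(x-1) := by field_simp; ring
    linarith

lemma sum_inv_log (n a : ℕ) (b : ℕ) (hab : a ≤ b) : b < n →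
    (Real.log ((n:ℝ)-a) - Real.log ((n:ℝ)-b)) - (1/((n:ℝ)-b) - 1/((n:ℝ)-a))
      ≤ ∑ i ∈ Finset.Ico a b, 1/((n:ℝ)-i) ∧
    ∑ i ∈ Finset.Ico a b, 1/((n:ℝ)-i) ≤ Real.log ((n:ℝ)-a) - Real.log ((n:ℝ)-b) := by
  induction b, hab using Nat.le_induction with
  | base => intro _; simp
  | succ b hb ih =>
    intro hbn
    obtain ⟨ih1, ih2⟩ := ih (by omega)
    rw [Finset.sum_Ico_succ_top hb]
    have hx : (2:ℝ) ≤ (n:ℝ) - b := by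
      have : (b:ℝ) + 2 ≤ (n:ℝ) := by exact_mod_cast by omega
      linarith
    obtain ⟨g1, g2⟩ := log_gap_bounds hx
    have hc : ((n:ℝ) - ↑(b+1)) = ((n:ℝ) - b) - 1 := by push_cast; ring
    rw [hc]
    constructor <;> linarith

lemma fuse (f : ℕ → ℝ) (P : ℕ → ℕ) (hP : Monotone P) :
    ∀ q, 1 ≤ q → ∑ j ∈ Finset.Ico 1 q, ∑ i ∈ Finset.Ico (P j) (P (j+1)), f i
      = ∑ i ∈ Finset.Ico (P 1) (P q), f i := by
  intro q hq
  induction q, hq using Nat.le_induction with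
  | base => simp
  | succ q hq ih =>
    rw [Finset.sum_Ico_succ_top hq, ih,
      Finset.sum_Ico_consecutive _ (hP hq) (hP (Nat.le_succ q))]

lemma reindex (n : ℕ) (psz : ℕ → ℕ) (j : ℕ) :
    ∑ i ∈ Finset.Ico (pstar psz j) (pstar psz (j+1)),
      (1 / ((n : ℝ) - i + (pstar psz j : ℕ)))
    = ∑ k ∈ Finset.range (psz j), 1 / ((n:ℝ) - k) := by
  rw [Finset.sum_Ico_eq_sum_range]
  have h : pstar psz (j+1) - pstar psz j = psz j := by
    unfold pstar; rw [Finset.sum_range_succ]; omega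
  rw [h]
  apply Finset.sum_congr rfl
  intro k _
  push_cast
  ring_nf

/-- Equation (5.3): `Σ_{i=p₁+1}^p σ_{n,1,i}² = σ_n² + o(1)`, where
`σ_{n,1,i}² = 2(1/(n-i+1) - 1/(n-i+1+p*_{g(i)-1}))`. -/
theorem statement_15
    (p q : ℕ → ℕ) (psz : ℕ → ℕ → ℕ) (η : ℝ) (hη0 : 0 < η) (hη1 : η < 1)
    (hp2 : ∀ n, 3 ≤ n → 2 ≤ p n) (hpn : ∀ n, 3 ≤ n → p n < n)
    (hq2 : ∀ n, 3 ≤ n → 2 ≤ q n)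
    (hpsz1 : ∀ n, 3 ≤ n → ∀ j < q n, 1 ≤ psz n j)
    (hsumsz : ∀ n, 3 ≤ n → ∑ j ∈ Finset.range (q n), psz n j = p n)
    (hinf : ∃ c > 0, ∀ n, 3 ≤ n → ∀ j < q n, c ≤ (psz n j : ℝ) * q n / n)
    (hsup : ∃ C < 1, ∀ n, 3 ≤ n → (p n : ℝ) / n ≤ C)
    (hmax : ∀ n, 3 ≤ n → ∀ j < q n, (psz n j : ℝ) ≤ η * p n) :
    Tendsto (fun n =>
        (∑ j ∈ Finset.Ico 1 (q n),
          ∑ i ∈ Finset.Ico (pstar (psz n) j) (pstar (psz n) (j + 1)),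
            2 * (1 / ((n : ℝ) - i) - 1 / ((n : ℝ) - i + pstar (psz n) j))) -
        sigSq n (p n) (q n) (psz n))
      atTop (𝓝 0) := by
  obtain ⟨C, hC1, hC⟩ := hsup
  have hC0 : (0:ℝ) < 1 - C := by linarith
  apply squeeze_zero_norm' (a := fun n : ℕ => (4/(1-C)) / n)
  · filter_upwards [eventually_ge_atTop 3] with n hn
    have hn3 : (3:ℝ) ≤ (n:ℝ) := by exact_mod_cast hn
    have hN0 : (0:ℝ) < n := by linarith
    have hq1 : 1 ≤ q n := le_trans (by norm_num) (hq2 n hn)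
    have hsum := hsumsz n hn
    have hpltn := hpn n hn
    have hpszle : ∀ j < q n, psz n j ≤ p n := by
      intro j hj
      rw [← hsum]
      exact Finset.single_le_sum (f := fun t => psz n t) (fun t _ => Nat.zero_le _)
        (Finset.mem_range.mpr hj)
    have hPmono : Monotone (pstar (psz n)) := fun a b hab =>
      Finset.sum_le_sum_of_subset (Finset.range_subset_range.mpr hab)
    have hPq : pstar (psz n) (q n) = p n := hsum
    have hP1le : pstar (psz n) 1 ≤ p n := by rw [← hPq]; exact hPmono hq1
    have hP1 : pstar (psz n) 1 = psz n 0 := by simp [pstar]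
    have hNp : (0:ℝ) < (n:ℝ) - p n := by
      have : (p n : ℝ) < (n:ℝ) := by exact_mod_cast hpltn
      linarith
    have hNpC : (1 - C) * n ≤ (n:ℝ) - p n := by
      have h := hC n hn
      have : (p n : ℝ) ≤ C * n := by
        rw [div_le_iff₀ hN0] at h; linarith
      linarith
    -- notation
    set S1 : ℝ := ∑ i ∈ Finset.Ico (pstar (psz n) 1) (p n), 1/((n:ℝ)-i) with hS1def
    set L1 : ℝ := Real.log ((n:ℝ) - pstar (psz n) 1) - Real.log ((n:ℝ) - p n) with hL1def
    set S2 : ℕ → ℝ := fun j => ∑ k ∈ Finset.range (psz n j), 1/((n:ℝ)-k) with hS2def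
    set L2 : ℕ → ℝ := fun j => Real.log (n:ℝ) - Real.log ((n:ℝ) - psz n j) with hL2def
    -- rewrite the double sum
    have hDS : (∑ j ∈ Finset.Ico 1 (q n),
          ∑ i ∈ Finset.Ico (pstar (psz n) j) (pstar (psz n) (j + 1)),
            2 * (1 / ((n : ℝ) - i) - 1 / ((n : ℝ) - i + pstar (psz n) j)))
        = 2 * S1 - 2 * ∑ j ∈ Finset.Ico 1 (q n), S2 j := by
      have e1 : ∀ j ∈ Finset.Ico 1 (q n),
          ∑ i ∈ Finset.Ico (pstar (psz n) j) (pstar (psz n) (j + 1)),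
            2 * (1 / ((n : ℝ) - i) - 1 / ((n : ℝ) - i + pstar (psz n) j))
          = 2 * (∑ i ∈ Finset.Ico (pstar (psz n) j) (pstar (psz n) (j+1)), 1/((n:ℝ)-i))
            - 2 * S2 j := by
        intro j _
        simp only [hS2def]
        rw [← reindex n (psz n) j, Finset.mul_sum, Finset.mul_sum, ← Finset.sum_sub_distrib]
        exact Finset.sum_congr rfl fun i _ => by ring
      rw [Finset.sum_congr rfl e1, Finset.sum_sub_distrib, ← Finset.mul_sum, ← Finset.mul_sum,
        fuse _ _ hPmono (q n) hq1, hPq]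
    -- rewrite sigSq
    have hlogsplit : ∀ m : ℕ, m < n →
        Real.log (1 - (m:ℝ)/n) = Real.log ((n:ℝ) - m) - Real.log (n:ℝ) := by
      intro m hm
      have hmn : (m:ℝ) < n := by exact_mod_cast hm
      rw [show (1:ℝ) - (m:ℝ)/n = ((n:ℝ) - m)/n by field_simp,
        Real.log_div (by linarith) (by linarith)]
    have hsig : sigSq n (p n) (q n) (psz n)
        = 2 * (L1 - ∑ j ∈ Finset.Ico 1 (q n), L2 j) := by
      unfold sigSq
      rw [Finset.sum_congr rfl (fun j hj =>
        hlogsplit (psz n j) (lt_of_le_of_lt (hpszle j (Finset.mem_range.mp hj)) hpltn)),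
        hlogsplit (p n) hpltn]
      rw [Finset.range_eq_Ico, Finset.sum_eq_sum_Ico_succ_bot (by omega : 0 < q n)]
      simp only [hL1def, hL2def, hP1, Finset.sum_sub_distrib]
      ring
    rw [hDS, hsig]
    have hkey : 2 * S1 - 2 * (∑ j ∈ Finset.Ico 1 (q n), S2 j)
        - 2 * (L1 - ∑ j ∈ Finset.Ico 1 (q n), L2 j)
        = 2 * ((S1 - L1) - ((∑ j ∈ Finset.Ico 1 (q n), S2 j)
          - (∑ j ∈ Finset.Ico 1 (q n), L2 j))) := by ring
    rw [hkey]
    -- bounds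
    obtain ⟨b1, b2⟩ := sum_inv_log n (pstar (psz n) 1) (p n) hP1le hpltn
    have hNP1 : (0:ℝ) < (n:ℝ) - pstar (psz n) 1 := by
      have : (pstar (psz n) 1 : ℝ) ≤ (p n : ℝ) := by exact_mod_cast hP1le
      linarith
    have hB1 : |S1 - L1| ≤ 1/((n:ℝ) - p n) := by
      rw [abs_le]
      have h1 : (0:ℝ) < 1/((n:ℝ) - pstar (psz n) 1) := by positivity
      constructor <;> [skip; skip] <;> simp only [hS1def, hL1def] <;> linarith
    have hB2 : ∀ j ∈ Finset.Ico 1 (q n),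
        |S2 j - L2 j| ≤ (psz n j : ℝ) * (1/(((n:ℝ) - p n) * n)) := by
      intro j hj
      have hjq : j < q n := (Finset.mem_Ico.mp hj).2
      have hle : psz n j ≤ p n := hpszle j hjq
      have hlt : psz n j < n := lt_of_le_of_lt hle hpltn
      obtain ⟨c1, c2⟩ := sum_inv_log n 0 (psz n j) (Nat.zero_le _) hlt
      simp only [Nat.cast_zero, sub_zero] at c1 c2
      rw [← Finset.range_eq_Ico] at c1 c2
      have hNm : (0:ℝ) < (n:ℝ) - psz n j := by
        have : (psz n j : ℝ) < n := by exact_mod_cast hlt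
        linarith
      have heq : 1/((n:ℝ) - psz n j) - 1/(n:ℝ) = (psz n j : ℝ)/(((n:ℝ) - psz n j) * n) := by
        field_simp; ring
      have hle2 : (psz n j : ℝ)/(((n:ℝ) - psz n j) * n) ≤ (psz n j : ℝ)/(((n:ℝ) - p n) * n) := by
        apply div_le_div_of_nonneg_left (by positivity) (by positivity)
        have : ((n:ℝ) - p n) ≤ (n:ℝ) - psz n j := by
          have : (psz n j : ℝ) ≤ p n := by exact_mod_cast hle
          linarith
        nlinarith
      rw [abs_le]
      have hm : (psz n j : ℝ) * (1/(((n:ℝ) - p n) * n)) = (psz n j : ℝ) / (((n:ℝ) - p n) * n) :=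
        mul_one_div _ _
      refine ⟨?_, ?_⟩ <;> simp only [hS2def, hL2def] <;> linarith
    have hB2' : |(∑ j ∈ Finset.Ico 1 (q n), S2 j) - (∑ j ∈ Finset.Ico 1 (q n), L2 j)|
        ≤ 1/((n:ℝ) - p n) := by
      rw [← Finset.sum_sub_distrib]
      calc |∑ j ∈ Finset.Ico 1 (q n), (S2 j - L2 j)|
          ≤ ∑ j ∈ Finset.Ico 1 (q n), |S2 j - L2 j| := Finset.abs_sum_le_sum_abs _ _
        _ ≤ ∑ j ∈ Finset.Ico 1 (q n), (psz n j : ℝ) * (1/(((n:ℝ) - p n) * n)) :=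
            Finset.sum_le_sum hB2
        _ = (∑ j ∈ Finset.Ico 1 (q n), (psz n j : ℝ)) * (1/(((n:ℝ) - p n) * n)) := by
            rw [Finset.sum_mul]
        _ ≤ (p n : ℝ) * (1/(((n:ℝ) - p n) * n)) := by
            apply mul_le_mul_of_nonneg_right _ (by positivity)
            have : ∑ j ∈ Finset.Ico 1 (q n), psz n j ≤ p n := by
              rw [← hsum, Finset.range_eq_Ico]
              exact Finset.sum_le_sum_of_subset (Finset.Ico_subset_Ico (by omega) le_rfl)
            calc (∑ j ∈ Finset.Ico 1 (q n), (psz n j : ℝ))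
                = ((∑ j ∈ Finset.Ico 1 (q n), psz n j : ℕ) : ℝ) := by push_cast; rfl
              _ ≤ (p n : ℝ) := by exact_mod_cast this
        _ ≤ 1/((n:ℝ) - p n) := by
            rw [mul_one_div, div_le_div_iff₀ (by positivity) hNp]
            have hpN : (p n : ℝ) ≤ n := by exact_mod_cast hpltn.le
            nlinarith
    calc ‖2 * ((S1 - L1) - ((∑ j ∈ Finset.Ico 1 (q n), S2 j)
            - (∑ j ∈ Finset.Ico 1 (q n), L2 j)))‖
        ≤ 2 * (|S1 - L1| + |(∑ j ∈ Finset.Ico 1 (q n), S2 j)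
            - (∑ j ∈ Finset.Ico 1 (q n), L2 j)|) := by
          rw [Real.norm_eq_abs, abs_mul, abs_two]
          gcongr
          exact abs_sub _ _
      _ ≤ 4/((n:ℝ) - p n) := by
          have := hB1; have := hB2'
          rw [div_eq_mul_one_div]
          linarith
      _ ≤ (4/(1-C)) / n := by
          rw [div_div]
          apply div_le_div_of_nonneg_left (by norm_num) (by positivity) hNpC
  · exact tendsto_const_div_atTop_nhds_zero_nat _
end
end
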